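/- arXiv:1003.4014 — 6 statements merged into one kernel-verified Lean document; each statement's English description precedes it below -/
import Mathlib

section
/- Let V = ℝ^{4r,4s} carry a quaternionic structure I₁, I₂, I₃ with invariant pseudo-Euclidean metric η, and let 𝔰𝔭(r,s) = {f ∈ 𝔰𝔬(V) : [f,I₁] = [f,I₂] = [f,I₃] = 0}. Then every algebraic curvature tensor R ∈ ℛ(𝔰𝔭(r,s)) satisfies R(I_α X, Y) = -R(X, I_α Y) for all α ∈ {1,2,3} and all X, Y ∈ V; consequently R(xX, Y) = R(X, x̄Y) for all quaternions x. -/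
/-- On `V = ℝ^{4r,4s}` with quaternionic structure `I₁,I₂,I₃` and invariant metric `η`,
any algebraic curvature tensor `R` of type `𝔰𝔭(r,s)` satisfies
`R(I_α X, Y) = -R(X, I_α Y)` for `α = 1,2,3`, and consequently
`R(xX, Y) = R(X, x̄Y)` for every quaternion `x`. -/
theorem curvature_quaternion_compatibility {V : Type*} [AddCommGroup V] [Module ℝ V]
    (η : LinearMap.BilinForm ℝ V)
    (hsymm : ∀ x y, η x y = η y x)
    (hnd : ∀ x, (∀ y, η x y = 0) → x = 0)
    (I1 I2 I3 : V →ₗ[ℝ] V)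
    (hI1 : ∀ X, I1 (I1 X) = -X) (hI2 : ∀ X, I2 (I2 X) = -X) (hI3 : ∀ X, I3 (I3 X) = -X)
    (hI12 : ∀ X, I1 (I2 X) = I3 X) (hI21 : ∀ X, I2 (I1 X) = -(I3 X))
    (hinv1 : ∀ X Y, η (I1 X) (I1 Y) = η X Y)
    (hinv2 : ∀ X Y, η (I2 X) (I2 Y) = η X Y)
    (hinv3 : ∀ X Y, η (I3 X) (I3 Y) = η X Y)
    (R : V → V → (V →ₗ[ℝ] V))
    (hval : ∀ u v, (∀ x y, η ((R u v) x) y + η x ((R u v) y) = 0) ∧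
      (R u v) ∘ₗ I1 = I1 ∘ₗ (R u v) ∧ (R u v) ∘ₗ I2 = I2 ∘ₗ (R u v) ∧
      (R u v) ∘ₗ I3 = I3 ∘ₗ (R u v))
    (hRskew : ∀ u v, R u v = - R v u)
    (hbil1 : ∀ u u' v, R (u + u') v = R u v + R u' v)
    (hbil2 : ∀ (r : ℝ) (u v : V), R (r • u) v = r • R u v)
    (hBianchi : ∀ u v w, R u v w + R v w u + R w u v = 0) :
    (∀ X Y, R (I1 X) Y = - R X (I1 Y) ∧ R (I2 X) Y = - R X (I2 Y) ∧
      R (I3 X) Y = - R X (I3 Y)) ∧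
    (∀ (x : Quaternion ℝ) (X Y : V),
      R (x.re • X + x.imI • I1 X + x.imJ • I2 X + x.imK • I3 X) Y =
        R X ((star x).re • Y + (star x).imI • I1 Y + (star x).imJ • I2 Y +
          (star x).imK • I3 Y)) := by
  -- skew symmetry in the last two slots
  have hA : ∀ u v z w, η (R u v z) w = - η (R u v w) z := by
    intro u v z w
    have h := (hval u v).1 z w
    have h2 := hsymm z (R u v w)
    linarith
  -- skew symmetry in the first two slots
  have hB : ∀ u v z w, η (R u v z) w = - η (R v u z) w := by
    intro u v z w
    rw [hRskew u v]
    simp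
  -- Bianchi identity in bilinear form
  have hC : ∀ u v z w, η (R u v z) w + η (R v z u) w + η (R z u v) w = 0 := by
    intro u v z w
    have h := congrArg (fun t => η t w) (hBianchi u v z)
    simpa using h
  -- pair symmetry
  have hP : ∀ u v z w, η (R u v z) w = η (R z w u) v := by
    intro u v z w
    have h1 := hC u v z w
    have h2 := hC v z w u
    have h3 := hC z w u v
    have h4 := hC w u v z
    have e1 := hA v z w u
    have e2 := hA z w v u
    have e3 := hB w v z u
    have e4 := hA v w z u
    have e5 := hA w u z v
    have e6 := hB u z w v
    have e7 := hA z u w v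
    have e8 := hA u v w z
    linarith
  -- generic result for a compatible complex structure J
  have hmainJ : ∀ (J : V →ₗ[ℝ] V), (∀ X, J (J X) = -X) →
      (∀ X Y, η (J X) (J Y) = η X Y) →
      (∀ u v, (R u v) ∘ₗ J = J ∘ₗ (R u v)) →
      ∀ X Y, R (J X) Y = - R X (J Y) := by
    intro J hJ hinvJ hcomm X Y
    have hJeta : ∀ a b, η (J a) b = - η a (J b) := by
      intro a b
      have hb : J (-(J b)) = b := by rw [map_neg, hJ]; simp
      calc η (J a) b = η (J a) (J (-(J b))) := by rw [hb]
        _ = η a (-(J b)) := hinvJ a (-(J b))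
        _ = - η a (J b) := by simp
    apply LinearMap.ext
    intro u
    have h0 : ∀ v, η (R (J X) Y u + R X (J Y) u) v = 0 := by
      intro v
      have e1 : η (R u v (J X)) Y = η (R (J X) Y u) v := hP u v (J X) Y
      have e2 : R u v (J X) = J (R u v X) := DFunLike.congr_fun (hcomm u v) X
      have e3 : η (J (R u v X)) Y = - η (R u v X) (J Y) := hJeta _ _
      have e4 : η (R u v X) (J Y) = η (R X (J Y) u) v := hP u v X (J Y)
      have h5 : η (R (J X) Y u) v + η (R X (J Y) u) v = 0 := by
        rw [← e1, e2]; linarith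
      simpa [map_add] using h5
    have hz := hnd _ h0
    have : R (J X) Y u = - (R X (J Y) u) := eq_neg_of_add_eq_zero_left hz
    simpa using this
  have m1 : ∀ X Y, R (I1 X) Y = - R X (I1 Y) :=
    hmainJ I1 hI1 hinv1 (fun u v => (hval u v).2.1)
  have m2 : ∀ X Y, R (I2 X) Y = - R X (I2 Y) :=
    hmainJ I2 hI2 hinv2 (fun u v => (hval u v).2.2.1)
  have m3 : ∀ X Y, R (I3 X) Y = - R X (I3 Y) :=
    hmainJ I3 hI3 hinv3 (fun u v => (hval u v).2.2.2)
  -- bilinearity in the second slot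
  have hbil1' : ∀ u v v', R u (v + v') = R u v + R u v' := by
    intro u v v'
    rw [hRskew u (v + v'), hbil1, hRskew v u, hRskew v' u]
    abel
  have hbil2' : ∀ (r : ℝ) (u v : V), R u (r • v) = r • R u v := by
    intro r u v
    rw [hRskew u (r • v), hbil2, hRskew v u]
    simp
  refine ⟨fun X Y => ⟨m1 X Y, m2 X Y, m3 X Y⟩, ?_⟩
  intro x X Y
  rw [hbil1, hbil1, hbil1, hbil2, hbil2, hbil2, hbil2,
    hbil1', hbil1', hbil1', hbil2', hbil2', hbil2', hbil2',
    m1, m2, m3]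
  simp only [Quaternion.re_star, Quaternion.imI_star, Quaternion.imJ_star,
    Quaternion.imK_star, smul_neg, neg_smul]
end

section
/- For l ≥ 2, let f₁, …, f_l be an ℍ-basis of ℍ^l and let B(l) = span_ℝ{f₁, …, f_l, if₁+jf₂, …, if_{l-1}+jf_l}. Then B(l) satisfies ρ(B(l)) = B(l), where ρ(L) = span_ℝ{X, Y, jX - iY : X, Y ∈ L with jX - iY ∈ L}. Moreover, B(1) = span_ℝ{f₁} does not satisfy this: ρ(B(1)) = 0. -/
noncomputable section

def qi : Quaternion ℝ := ⟨0, 1, 0, 0⟩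
def qj : Quaternion ℝ := ⟨0, 0, 1, 0⟩
def qk : Quaternion ℝ := ⟨0, 0, 0, 1⟩

/-- `ρ(L) = span_ℝ {X, Y, jX - iY : X, Y ∈ L and jX - iY ∈ L}`. -/
def rho (n : ℕ) (L : Submodule ℝ (Fin n → Quaternion ℝ)) :
    Submodule ℝ (Fin n → Quaternion ℝ) :=
  Submodule.span ℝ {v | ∃ X Y, X ∈ L ∧ Y ∈ L ∧ qj • X - qi • Y ∈ L ∧
    (v = X ∨ v = Y ∨ v = qj • X - qi • Y)}

/-- `B(l) = span_ℝ {f₁, …, f_l, if₁+jf₂, …, if_{l-1}+jf_l}`. -/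
def Bspace (l : ℕ) (f : Fin l → (Fin l → Quaternion ℝ)) :
    Submodule ℝ (Fin l → Quaternion ℝ) :=
  Submodule.span ℝ (Set.range f ∪
    {v | ∃ t s : Fin l, (s : ℕ) = (t : ℕ) + 1 ∧ v = qi • f t + qj • f s})

/-- `ρ(L) ⊆ L` always, since every generating vector of `ρ(L)` lies in `L`. -/
lemma rho_le (n : ℕ) (L : Submodule ℝ (Fin n → Quaternion ℝ)) : rho n L ≤ L := by
  rw [rho, Submodule.span_le]
  rintro v ⟨X, Y, hX, hY, hJ, rfl | rfl | rfl⟩ <;> assumption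

lemma mem_B_f {l : ℕ} (f : Fin l → (Fin l → Quaternion ℝ)) (t : Fin l) :
    f t ∈ Bspace l f :=
  Submodule.subset_span (Or.inl ⟨t, rfl⟩)

lemma mem_B_g {l : ℕ} (f : Fin l → (Fin l → Quaternion ℝ)) {t s : Fin l}
    (h : (s : ℕ) = (t : ℕ) + 1) : qi • f t + qj • f s ∈ Bspace l f :=
  Submodule.subset_span (Or.inr ⟨t, s, h, rfl⟩)

lemma key_eq {l : ℕ} (f : Fin l → (Fin l → Quaternion ℝ)) (t s : Fin l) :
    qj • f s - qi • (-(f t)) = qi • f t + qj • f s := by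
  rw [smul_neg, sub_neg_eq_add, add_comm]

/-- For `l ≥ 2` and an `ℍ`-basis `f₁,…,f_l` of `ℍ^l`, the space `B(l)` satisfies
`ρ(B(l)) = B(l)`; whereas `B(1)` does not: `ρ(B(1)) = 0`. -/
theorem Bspace_rho (l : ℕ) (hl : 2 ≤ l)
    (f : Module.Basis (Fin l) (Quaternion ℝ) (Fin l → Quaternion ℝ))
    (f₁ : Module.Basis (Fin 1) (Quaternion ℝ) (Fin 1 → Quaternion ℝ)) :
    rho l (Bspace l ⇑f) = Bspace l ⇑f ∧ rho 1 (Bspace 1 ⇑f₁) = ⊥ := by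
  constructor
  · refine le_antisymm (rho_le l _) ?_
    rw [Bspace, Submodule.span_le]
    rintro v (⟨t, rfl⟩ | ⟨t, s, hts, rfl⟩)
    · -- the generator `f t` lies in `ρ(B)`
      rcases Nat.eq_zero_or_pos (t : ℕ) with h0 | h1
      · -- case `t = 0`: use the triple `X = -f₁`, `Y = f₀`, `jX - iY = -(if₀ + jf₁)`
        set s₁ : Fin l := ⟨1, by omega⟩ with hs₁
        refine Submodule.subset_span ⟨-(f s₁), f t, neg_mem (mem_B_f f s₁),
          mem_B_f f t, ?_, Or.inr (Or.inl rfl)⟩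
        have : qj • (-(f s₁)) - qi • f t = -(qi • f t + qj • f s₁) := by
          rw [smul_neg]; abel
        rw [this]
        exact neg_mem (mem_B_g f (by simp [hs₁, h0]))
      · -- case `t ≥ 1`: use the triple `X = f_t`, `Y = -f_{t-1}`,
        -- `jX - iY = if_{t-1} + jf_t`
        set t' : Fin l := ⟨(t : ℕ) - 1, by omega⟩ with ht'
        refine Submodule.subset_span ⟨f t, -(f t'), mem_B_f f t,
          neg_mem (mem_B_f f t'), ?_, Or.inl rfl⟩
        rw [key_eq]
        exact mem_B_g f (by simp [ht']; omega)
    · -- the generator `if_t + jf_s` (with `s = t+1`) lies in `ρ(B)`: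
      -- it equals `jX - iY` for `X = f_s`, `Y = -f_t`
      refine Submodule.subset_span ⟨f s, -(f t), mem_B_f f s, neg_mem (mem_B_f f t),
        ?_, Or.inr (Or.inr (key_eq f t s).symm)⟩
      rw [key_eq]
      exact mem_B_g f hts
  · -- the case `l = 1`: `B(1) = ℝ • f₁ 0` and `ρ(B(1)) = ⊥`
    have hempty : {v | ∃ t s : Fin 1, (s : ℕ) = (t : ℕ) + 1 ∧
        v = qi • (⇑f₁) t + qj • (⇑f₁) s} = ∅ := by
      ext v
      simp only [Set.mem_setOf_eq, Set.mem_empty_iff_false, iff_false, not_exists]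
      rintro t s ⟨h, -⟩
      omega
    have hB1 : Bspace 1 ⇑f₁ = Submodule.span ℝ {f₁ 0} := by
      rw [Bspace, hempty, Set.union_empty]
      congr 1
      rw [Set.range_unique]
      rfl
    rw [eq_bot_iff, rho, Submodule.span_le]
    rintro v ⟨X, Y, hX, hY, hJ, hv⟩
    rw [hB1, Submodule.mem_span_singleton] at hX hY hJ
    obtain ⟨a, rfl⟩ := hX
    obtain ⟨b, rfl⟩ := hY
    obtain ⟨c, hc⟩ := hJ
    -- pick a coordinate where `f₁ 0` is nonzero
    have hne : f₁ 0 ≠ 0 := f₁.ne_zero 0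
    obtain ⟨n, hn⟩ : ∃ n, f₁ 0 n ≠ 0 := by
      by_contra h
      push_neg at h
      exact hne (funext h)
    have heq : (a • qj - b • qi - c • (1 : Quaternion ℝ)) * f₁ 0 n = 0 := by
      have := congrFun hc n
      simp only [Pi.sub_apply, Pi.smul_apply, smul_eq_mul] at this
      rw [mul_smul_comm, mul_smul_comm] at this
      rw [sub_mul, sub_mul, smul_mul_assoc, smul_mul_assoc, smul_mul_assoc, one_mul,
        ← this]
      abel
    have hq : a • qj - b • qi - c • (1 : Quaternion ℝ) = 0 :=
      (mul_eq_zero.mp heq).resolve_right hn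
    have ha : a = 0 := by
      have := congrArg QuaternionAlgebra.imJ hq
      change a * 1 - b * 0 - c * 0 = 0 at this
      linarith
    have hb : b = 0 := by
      have := congrArg QuaternionAlgebra.imI hq
      change a * 0 - b * 1 - c * 0 = 0 at this
      linarith
    rcases hv with rfl | rfl | rfl <;>
      simp [ha, hb, Submodule.mem_bot]

end
end

section
/- Let f₁, f₂, f₃ be an ℍ-basis of ℍ³ and A(3) = span_ℝ{f₁, f₃, if₁ + jf₂, f₂ + if₃}. Then ρ(A(3)) = 0, where ρ(L) = span_ℝ{X, Y, jX - iY : X, Y ∈ L, jX - iY ∈ L}. -/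
noncomputable section

lemma mem_span4 {M : Type*} [AddCommGroup M] [Module ℝ M] (v1 v2 v3 v4 x : M) :
    x ∈ Submodule.span ℝ {v1, v2, v3, v4} ↔
      ∃ a b c d : ℝ, x = a • v1 + b • v2 + c • v3 + d • v4 := by
  simp only [Submodule.mem_span_insert, Submodule.mem_span_singleton]
  constructor
  · rintro ⟨a, _, ⟨b, _, ⟨c, _, ⟨d, rfl⟩, rfl⟩, rfl⟩, rfl⟩
    exact ⟨a, b, c, d, by abel⟩
  · rintro ⟨a, b, c, d, rfl⟩
    exact ⟨a, _, ⟨b, _, ⟨c, _, ⟨d, rfl⟩, rfl⟩, rfl⟩, by abel⟩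

lemma key (f : Module.Basis (Fin 3) (Quaternion ℝ) (Fin 3 → Quaternion ℝ))
    (a b c d e g h l a' b' c' d' : ℝ)
    (E : qj • (a • f 0 + b • f 2 + c • (qi • f 0 + qj • f 1) + d • (f 1 + qi • f 2))
       - qi • (a' • f 0 + b' • f 2 + c' • (qi • f 0 + qj • f 1) + d' • (f 1 + qi • f 2))
       = e • f 0 + g • f 2 + h • (qi • f 0 + qj • f 1) + l • (f 1 + qi • f 2)) :
    a = 0 ∧ b = 0 ∧ c = 0 ∧ d = 0 ∧ a' = 0 ∧ b' = 0 ∧ c' = 0 ∧ d' = 0 := by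
  have h1 : ∀ (q : Quaternion ℝ) (X : Fin 3 → Quaternion ℝ), f.repr (q • X) = q • f.repr X :=
    fun q X => f.repr.map_smul q X
  have h2 : ∀ (r : ℝ) (X : Fin 3 → Quaternion ℝ), f.repr (r • X) = r • f.repr X :=
    fun r X => by rw [← algebraMap_smul (Quaternion ℝ) r X, h1, algebraMap_smul]
  have E' := congrArg f.repr E
  simp only [map_add, map_sub, h2, h1, Module.Basis.repr_self] at E'
  have E0 := congrArg (fun z => z 0) E'
  have E1 := congrArg (fun z => z 1) E'
  have E2 := congrArg (fun z => z 2) E'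
  simp only [Finsupp.add_apply, Finsupp.sub_apply, Finsupp.smul_apply,
    Finsupp.single_apply] at E0 E1 E2
  have qc : qi.re = 0 ∧ qi.imI = 1 ∧ qi.imJ = 0 ∧ qi.imK = 0 ∧ qj.re = 0 ∧ qj.imI = 0 ∧ qj.imJ = 1 ∧ qj.imK = 0 :=
    ⟨rfl, rfl, rfl, rfl, rfl, rfl, rfl, rfl⟩
  open Quaternion in simp [Quaternion.ext_iff, qc] at E0 E1 E2
  refine ⟨?_, ?_, ?_, ?_, ?_, ?_, ?_, ?_⟩ <;> linarith [E0.1, E0.2.1, E0.2.2.1, E0.2.2.2,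
    E1.1, E1.2.1, E1.2.2.1, E1.2.2.2, E2.1, E2.2.1, E2.2.2.1, E2.2.2.2]

/-- For an `ℍ`-basis `f₁, f₂, f₃` of `ℍ³` and
`A(3) = span_ℝ {f₁, f₃, if₁+jf₂, f₂+if₃}`, one has `ρ(A(3)) = 0`. -/
theorem rho_A3_eq_bot (f : Module.Basis (Fin 3) (Quaternion ℝ) (Fin 3 → Quaternion ℝ)) :
    rho 3 (Submodule.span ℝ
      {f 0, f 2, qi • f 0 + qj • f 1, f 1 + qi • f 2}) = ⊥ := by
  rw [rho, eq_bot_iff, Submodule.span_le]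
  rintro v ⟨X, Y, hX, hY, hXY, hv⟩
  rw [mem_span4] at hX hY hXY
  obtain ⟨a, b, c, d, rfl⟩ := hX
  obtain ⟨a', b', c', d', rfl⟩ := hY
  obtain ⟨e, g, h, l, E⟩ := hXY
  obtain ⟨ha, hb, hc, hd, ha', hb', hc', hd'⟩ := key f a b c d e g h l a' b' c' d' E
  subst ha hb hc hd ha' hb' hc' hd'
  simp only [zero_smul, add_zero, zero_add, smul_zero, sub_zero, sub_self] at hv
  rcases hv with rfl | rfl | rfl <;> simp [Submodule.mem_bot]

end
end

section
/- Every R ∈ ℛ(𝔰𝔭(1,n+1)_{ℍp}) satisfies: R(q, iq) = -R(jq, kq), R(q, jq) = R(iq, kq), R(q, kq) = -R(iq, jq), and R(I_r p, I_s p) = 0, R(I_r p, X) = 0 for all r, s ∈ {0,1,2,3} and all X in the g-orthogonal complement ℍⁿ of ℍp ⊕ ℍq. -/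
noncomputable section

/-- `I₀ = 1`, `I₁ = i`, `I₂ = j`, `I₃ = k`. -/
def Iq : Fin 4 → Quaternion ℝ := ![1, qi, qj, qk]

/-- The `g`-orthogonal complement of `ℍp ⊕ ℍq` in a quaternionic-Hermitian space. -/
def Esub {V : Type*} [AddCommGroup V] [Module (Quaternion ℝ) V]
    (g : V → V → Quaternion ℝ) (p q : V) : Set V :=
  {v | g p v = 0 ∧ g q v = 0}

lemma quat1 (α : Quaternion ℝ) (h : α.re = 0) :
    (α * star qi).re + (qj * (α * star qk)).re = 0 := by
  have e1 : qi.re = 0 ∧ qi.imI = 1 ∧ qi.imJ = 0 ∧ qi.imK = 0 := ⟨rfl, rfl, rfl, rfl⟩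
  have e2 : qj.re = 0 ∧ qj.imI = 0 ∧ qj.imJ = 1 ∧ qj.imK = 0 := ⟨rfl, rfl, rfl, rfl⟩
  have e3 : qk.re = 0 ∧ qk.imI = 0 ∧ qk.imJ = 0 ∧ qk.imK = 1 := ⟨rfl, rfl, rfl, rfl⟩
  obtain ⟨e1a, e1b, e1c, e1d⟩ := e1
  obtain ⟨e2a, e2b, e2c, e2d⟩ := e2
  obtain ⟨e3a, e3b, e3c, e3d⟩ := e3
  simp only [e1a, e1b, e1c, e1d, e2a, e2b, e2c, e2d, e3a, e3b, e3c, e3d, Quaternion.re_mul, Quaternion.imI_mul, Quaternion.imJ_mul, Quaternion.imK_mul, Quaternion.re_star, Quaternion.imI_star, Quaternion.imJ_star, Quaternion.imK_star, h]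
  ring

lemma quat2 (α : Quaternion ℝ) (h : α.re = 0) :
    (α * star qj).re + (qk * (α * star qi)).re = 0 := by
  have e1 : qi.re = 0 ∧ qi.imI = 1 ∧ qi.imJ = 0 ∧ qi.imK = 0 := ⟨rfl, rfl, rfl, rfl⟩
  have e2 : qj.re = 0 ∧ qj.imI = 0 ∧ qj.imJ = 1 ∧ qj.imK = 0 := ⟨rfl, rfl, rfl, rfl⟩
  have e3 : qk.re = 0 ∧ qk.imI = 0 ∧ qk.imJ = 0 ∧ qk.imK = 1 := ⟨rfl, rfl, rfl, rfl⟩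
  obtain ⟨e1a, e1b, e1c, e1d⟩ := e1
  obtain ⟨e2a, e2b, e2c, e2d⟩ := e2
  obtain ⟨e3a, e3b, e3c, e3d⟩ := e3
  simp only [e1a, e1b, e1c, e1d, e2a, e2b, e2c, e2d, e3a, e3b, e3c, e3d, Quaternion.re_mul, Quaternion.imI_mul, Quaternion.imJ_mul, Quaternion.imK_mul, Quaternion.re_star, Quaternion.imI_star, Quaternion.imJ_star, Quaternion.imK_star, h]
  ring

lemma quat3 (α : Quaternion ℝ) (h : α.re = 0) :
    (α * star qk).re + (qi * (α * star qj)).re = 0 := by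
  have e1 : qi.re = 0 ∧ qi.imI = 1 ∧ qi.imJ = 0 ∧ qi.imK = 0 := ⟨rfl, rfl, rfl, rfl⟩
  have e2 : qj.re = 0 ∧ qj.imI = 0 ∧ qj.imJ = 1 ∧ qj.imK = 0 := ⟨rfl, rfl, rfl, rfl⟩
  have e3 : qk.re = 0 ∧ qk.imI = 0 ∧ qk.imJ = 0 ∧ qk.imK = 1 := ⟨rfl, rfl, rfl, rfl⟩
  obtain ⟨e1a, e1b, e1c, e1d⟩ := e1
  obtain ⟨e2a, e2b, e2c, e2d⟩ := e2
  obtain ⟨e3a, e3b, e3c, e3d⟩ := e3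
  simp only [e1a, e1b, e1c, e1d, e2a, e2b, e2c, e2d, e3a, e3b, e3c, e3d, Quaternion.re_mul, Quaternion.imI_mul, Quaternion.imJ_mul, Quaternion.imK_mul, Quaternion.re_star, Quaternion.imI_star, Quaternion.imJ_star, Quaternion.imK_star, h]
  ring

/-- Every algebraic curvature tensor `R` of type `𝔰𝔭(1,n+1)_{ℍp}` satisfies
`R(q, iq) = -R(jq, kq)`, `R(q, jq) = R(iq, kq)`, `R(q, kq) = -R(iq, jq)`, and
`R(I_r p, I_s p) = 0`, `R(I_r p, X) = 0` for all `r, s` and all `X ∈ ℍⁿ`. -/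
theorem curvature_orthogonality_relations {V : Type*} [AddCommGroup V]
    [Module (Quaternion ℝ) V]
    (g : V → V → Quaternion ℝ)
    (hga : ∀ x y z, g (x + y) z = g x z + g y z)
    (hga' : ∀ x y z, g x (y + z) = g x y + g x z)
    (hgs : ∀ (c : Quaternion ℝ) (x y : V), g (c • x) y = c * g x y)
    (hgh : ∀ x y, star (g y x) = g x y)
    (hnd : ∀ v : V, (∀ w, (g v w).re = 0) → v = 0)
    (p q : V) (hp : g p p = 0) (hq : g q q = 0) (hpq : g p q = 1)
    (hspan : ∀ v : V, ∃ c d : Quaternion ℝ, ∃ e ∈ Esub g p q, v = c • p + d • q + e)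
    (R : V → V → (V →ₗ[Quaternion ℝ] V))
    (hRskew : ∀ x y, R x y = - R y x)
    (hBianchi : ∀ x y z, R x y z + R y z x + R z x y = 0)
    (hval : ∀ x y, (∀ u v, g ((R x y) u) v + g u ((R x y) v) = 0) ∧
      ∃ c : Quaternion ℝ, (R x y) p = c • p) :
    R q (qi • q) = - R (qj • q) (qk • q) ∧
    R q (qj • q) = R (qi • q) (qk • q) ∧
    R q (qk • q) = - R (qi • q) (qj • q) ∧
    (∀ r s : Fin 4, R (Iq r • p) (Iq s • p) = 0) ∧
    (∀ r : Fin 4, ∀ X ∈ Esub g p q, R (Iq r • p) X = 0) := by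
  -- basic consequences of additivity
  have hg0 : ∀ y, g 0 y = 0 := by
    intro y
    have h := hga 0 0 y
    rw [add_zero] at h
    have h2 : g 0 y + g 0 y = g 0 y + 0 := by rw [add_zero]; exact h.symm
    exact add_left_cancel h2
  have hgneg : ∀ x y, g (-x) y = - g x y := by
    intro x y
    have h := hga x (-x) y
    rw [add_neg_cancel, hg0] at h
    exact eq_neg_of_add_eq_zero_left (by rw [add_comm]; exact h.symm)
  -- right sesquilinearity
  have hgs' : ∀ (c : Quaternion ℝ) (x y : V), g x (c • y) = g x y * star c := by
    intro c x y
    rw [← hgh, hgs, star_mul, hgh]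
  -- real part is symmetric
  have hre : ∀ x y, (g x y).re = (g y x).re := by
    intro x y
    rw [← hgh x y, Quaternion.re_star]
  -- the symmetries of b(x,y,z,w) = Re g(R(x,y)z, w)
  have hb1 : ∀ x y z w, (g (R x y z) w).re = - (g (R y x z) w).re := by
    intro x y z w
    rw [hRskew x y]
    simp only [LinearMap.neg_apply, hgneg, Quaternion.re_neg]
  have hb2 : ∀ x y z w, (g (R x y z) w).re = - (g (R x y w) z).re := by
    intro x y z w
    have h := (hval x y).1 z w
    have h' : g (R x y z) w = - g z (R x y w) := eq_neg_of_add_eq_zero_left h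
    rw [h', Quaternion.re_neg, hre]
  have hb3 : ∀ x y z w,
      (g (R x y z) w).re + (g (R y z x) w).re + (g (R z x y) w).re = 0 := by
    intro x y z w
    have h := hBianchi x y z
    have := congrArg (fun v => (g v w).re) h
    simp only [hga, hg0, Quaternion.re_add, Quaternion.re_zero] at this
    linarith [this]
  -- pair symmetry
  have hsym : ∀ x y z w, (g (R x y z) w).re = (g (R z w x) y).re := by
    intro x y z w
    linarith [hb3 x y z w, hb3 y z w x, hb3 z w x y, hb3 w x y z,
      hb2 y z w x, hb2 z w y x, hb1 w y z x, hb2 y w x z, hb2 w x z y,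
      hb1 x z w y, hb2 z x w y, hb2 x y w z]
  -- the key vanishing lemma for the p-part
  have hkey : ∀ (lam : Quaternion ℝ) (bv : V), g p bv = 0 → R (lam • p) bv = 0 := by
    intro lam bv hb
    apply LinearMap.ext
    intro z
    rw [LinearMap.zero_apply]
    apply hnd
    intro w
    rw [hsym]
    obtain ⟨c, hc⟩ := (hval z w).2
    rw [map_smul, hc, smul_smul, hgs, hb, mul_zero, Quaternion.re_zero]
  -- Re g(R(z,w)q, q) = 0
  have halpha : ∀ z w, (g (R z w q) q).re = 0 := by
    intro z w
    have h := (hval z w).1 q q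
    rw [← hgh (R z w q) q] at h
    have h2 := congrArg QuaternionAlgebra.re h
    simp only [Quaternion.re_add, Quaternion.re_star, Quaternion.re_zero] at h2
    rw [hre]
    linarith [h2]
  -- generic machinery for the q-part
  have hqpart : ∀ (a b a' b' : Quaternion ℝ),
      (∀ z w, (a * (g (R z w q) q * star b)).re +
        (a' * (g (R z w q) q * star b')).re = 0) →
      R (a • q) (b • q) + R (a' • q) (b' • q) = 0 := by
    intro a b a' b' hzero
    apply LinearMap.ext
    intro z
    rw [LinearMap.zero_apply, LinearMap.add_apply]
    apply hnd
    intro w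
    rw [hga, Quaternion.re_add, hsym (a • q) (b • q) z w, hsym (a' • q) (b' • q) z w]
    simp only [map_smul, hgs, hgs', mul_assoc]
    exact hzero z w
  refine ⟨?_, ?_, ?_, ?_, ?_⟩
  · -- R(q, iq) = -R(jq, kq)
    have h := hqpart 1 qi qj qk ?_
    · rw [one_smul] at h
      exact eq_neg_of_add_eq_zero_left h
    · intro z w
      rw [one_mul]
      exact quat1 _ (halpha z w)
  · -- R(q, jq) = R(iq, kq)
    have h := hqpart 1 qj qk qi ?_
    · rw [one_smul] at h
      have h2 := eq_neg_of_add_eq_zero_left h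
      rw [hRskew (qk • q) (qi • q), neg_neg] at h2
      exact h2
    · intro z w
      rw [one_mul]
      exact quat2 _ (halpha z w)
  · -- R(q, kq) = -R(iq, jq)
    have h := hqpart 1 qk qi qj ?_
    · rw [one_smul] at h
      exact eq_neg_of_add_eq_zero_left h
    · intro z w
      rw [one_mul]
      exact quat3 _ (halpha z w)
  · -- R(I_r p, I_s p) = 0
    intro r s
    apply hkey
    rw [hgs', hp, zero_mul]
  · -- R(I_r p, X) = 0
    intro r X hX
    apply hkey
    exact hX.1

end
end

section
/- Let R ∈ ℛ(𝔰𝔭(1,n+1)_{ℍp}) and write R(I_r q, I_s q) = (C_{rs}, A_{rs}, S_{rs}, D_{rs}) in components (ℍ, 𝔰𝔭(n), ℍⁿ, Im ℍ). Then the ℍⁿ-components satisfy I_t S_{rs} + I_r S_{st} + I_s S_{tr} = 0 for all r, s, t ∈ {0,1,2,3}; consequently S_{rs} = I_r S_{0s} - I_s S_{0r} for r, s ≠ 0, and S_{03} = j S_{01} - i S_{02}. -/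
noncomputable section

/-- `RepQ g p q f a A X b`: the element `f` of `𝔰𝔭(1,n+1)_{ℍp}` has matrix data
`(a, A, X, b)` with respect to the decomposition `ℍp ⊕ ℍⁿ ⊕ ℍq`. -/
def RepQ {V : Type*} [AddCommGroup V] [Module (Quaternion ℝ) V]
    (g : V → V → Quaternion ℝ) (p q : V)
    (f : V →ₗ[Quaternion ℝ] V) (a : Quaternion ℝ) (A : V →ₗ[Quaternion ℝ] V)
    (X : V) (b : Quaternion ℝ) : Prop :=
  f p = a • p ∧ f q = b • p + X - (star a) • q ∧
  ∀ v ∈ Esub g p q, f v = (-(g v X)) • p + A v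

lemma qki : qk * qi = qj := by
  ext <;> simp only [Quaternion.re_mul, Quaternion.imI_mul,
    Quaternion.imJ_mul, Quaternion.imK_mul, Quaternion.re_neg, Quaternion.imI_neg,
    Quaternion.imJ_neg, Quaternion.imK_neg, Quaternion.re_one, Quaternion.imI_one,
    Quaternion.imJ_one, Quaternion.imK_one] <;> simp [qi, qj, qk]

lemma qkj : qk * qj = -qi := by
  ext <;> simp only [Quaternion.re_mul, Quaternion.imI_mul,
    Quaternion.imJ_mul, Quaternion.imK_mul, Quaternion.re_neg, Quaternion.imI_neg,
    Quaternion.imJ_neg, Quaternion.imK_neg, Quaternion.re_one, Quaternion.imI_one,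
    Quaternion.imJ_one, Quaternion.imK_one] <;> simp [qi, qj, qk]

lemma qkk : qk * qk = -1 := by
  ext <;> simp only [Quaternion.re_mul, Quaternion.imI_mul,
    Quaternion.imJ_mul, Quaternion.imK_mul, Quaternion.re_neg, Quaternion.imI_neg,
    Quaternion.imJ_neg, Quaternion.imK_neg, Quaternion.re_one, Quaternion.imI_one,
    Quaternion.imJ_one, Quaternion.imK_one] <;> simp [qi, qj, qk]

lemma qij : qi * qj = qk := by
  ext <;> simp only [Quaternion.re_mul, Quaternion.imI_mul,
    Quaternion.imJ_mul, Quaternion.imK_mul, Quaternion.re_neg, Quaternion.imI_neg,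
    Quaternion.imJ_neg, Quaternion.imK_neg, Quaternion.re_one, Quaternion.imI_one,
    Quaternion.imJ_one, Quaternion.imK_one] <;> simp [qi, qj, qk]

lemma qik : qi * qk = -qj := by
  ext <;> simp only [Quaternion.re_mul, Quaternion.imI_mul,
    Quaternion.imJ_mul, Quaternion.imK_mul, Quaternion.re_neg, Quaternion.imI_neg,
    Quaternion.imJ_neg, Quaternion.imK_neg, Quaternion.re_one, Quaternion.imI_one,
    Quaternion.imJ_one, Quaternion.imK_one] <;> simp [qi, qj, qk]

lemma qji : qj * qi = -qk := by
  ext <;> simp only [Quaternion.re_mul, Quaternion.imI_mul,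
    Quaternion.imJ_mul, Quaternion.imK_mul, Quaternion.re_neg, Quaternion.imI_neg,
    Quaternion.imJ_neg, Quaternion.imK_neg, Quaternion.re_one, Quaternion.imI_one,
    Quaternion.imJ_one, Quaternion.imK_one] <;> simp [qi, qj, qk]

lemma qjk : qj * qk = qi := by
  ext <;> simp only [Quaternion.re_mul, Quaternion.imI_mul,
    Quaternion.imJ_mul, Quaternion.imK_mul, Quaternion.re_neg, Quaternion.imI_neg,
    Quaternion.imJ_neg, Quaternion.imK_neg, Quaternion.re_one, Quaternion.imI_one,
    Quaternion.imJ_one, Quaternion.imK_one] <;> simp [qi, qj, qk]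

/-- For `R ∈ ℛ(𝔰𝔭(1,n+1)_{ℍp})` with components
`R(I_r q, I_s q) = (C_{rs}, A_{rs}, S_{rs}, D_{rs})`, the `ℍⁿ`-components satisfy
`I_t S_{rs} + I_r S_{st} + I_s S_{tr} = 0`; consequently
`S_{rs} = I_r S_{0s} - I_s S_{0r}` for `r, s ≠ 0`, and `S₀₃ = j S₀₁ - i S₀₂`. -/
theorem curvature_S_components {V : Type*} [AddCommGroup V] [Module (Quaternion ℝ) V]
    (g : V → V → Quaternion ℝ)
    (hga : ∀ x y z, g (x + y) z = g x z + g y z)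
    (hga' : ∀ x y z, g x (y + z) = g x y + g x z)
    (hgs : ∀ (c : Quaternion ℝ) (x y : V), g (c • x) y = c * g x y)
    (hgh : ∀ x y, star (g y x) = g x y)
    (p q : V) (hp : g p p = 0) (hq : g q q = 0) (hpq : g p q = 1)
    (hspan : ∀ v : V, ∃ c d : Quaternion ℝ, ∃ e ∈ Esub g p q, v = c • p + d • q + e)
    (R : V → V → (V →ₗ[Quaternion ℝ] V))
    (hRskew : ∀ x y, R x y = - R y x)
    (hBianchi : ∀ x y z, R x y z + R y z x + R z x y = 0)
    (C D : Fin 4 → Fin 4 → Quaternion ℝ)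
    (A : Fin 4 → Fin 4 → (V →ₗ[Quaternion ℝ] V))
    (S : Fin 4 → Fin 4 → V)
    (hS : ∀ r s, S r s ∈ Esub g p q)
    (hRep : ∀ r s, RepQ g p q (R (Iq r • q) (Iq s • q)) (C r s) (A r s) (S r s) (D r s)) :
    (∀ r s t : Fin 4, Iq t • S r s + Iq r • S s t + Iq s • S t r = 0) ∧
    (∀ r s : Fin 4, r ≠ 0 → s ≠ 0 → S r s = Iq r • S 0 s - Iq s • S 0 r) ∧
    (S 0 3 = qj • S 0 1 - qi • S 0 2) := by
  -- basic consequences of the axioms for g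
  have g0 : ∀ x : V, g x 0 = 0 := by
    intro x
    have h := hga' x 0 0
    rw [add_zero] at h
    exact (left_eq_add.mp h)
  have gsm : ∀ (c : Quaternion ℝ) (x y : V), g x (c • y) = g x y * star c := by
    intro c x y
    rw [← hgh, hgs, star_mul, hgh]
  have hqp : g q p = 1 := by rw [← hgh, hpq, star_one]
  -- extraction of the E-component: if c•p + d•q + e = 0 with e ∈ E then e = 0
  have key : ∀ (c d : Quaternion ℝ) (e : V), e ∈ Esub g p q →
      c • p + d • q + e = 0 → e = 0 := by
    intro c d e he heq
    obtain ⟨he1, he2⟩ := he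
    have hd : d = 0 := by
      have h := congrArg (g p) heq
      rw [hga', hga', gsm, gsm, hp, hpq, he1, g0, zero_mul, one_mul,
        zero_add, add_zero] at h
      simpa using congrArg star h
    have hc : c = 0 := by
      have h := congrArg (g q) heq
      rw [hga', hga', gsm, gsm, hqp, hq, he2, g0, zero_mul, one_mul,
        add_zero, add_zero] at h
      simpa using congrArg star h
    rw [hc, hd] at heq
    simpa using heq
  -- E is closed under smul and addition
  have memsmul : ∀ (c : Quaternion ℝ) (e : V), e ∈ Esub g p q → c • e ∈ Esub g p q := by
    intro c e ⟨h1, h2⟩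
    exact ⟨by rw [gsm, h1, zero_mul], by rw [gsm, h2, zero_mul]⟩
  have memadd : ∀ (e f : V), e ∈ Esub g p q → f ∈ Esub g p q → e + f ∈ Esub g p q := by
    intro e f ⟨h1, h2⟩ ⟨h3, h4⟩
    exact ⟨by rw [hga', h1, h3, add_zero], by rw [hga', h2, h4, add_zero]⟩
  -- part 1
  have h1 : ∀ r s t : Fin 4, Iq t • S r s + Iq r • S s t + Iq s • S t r = 0 := by
    intro r s t
    have hb := hBianchi (Iq r • q) (Iq s • q) (Iq t • q)
    rw [map_smul, map_smul, map_smul, (hRep r s).2.1, (hRep s t).2.1,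
      (hRep t r).2.1] at hb
    have hb' : (Iq t * D r s + Iq r * D s t + Iq s * D t r) • p +
        (-(Iq t * star (C r s)) + -(Iq r * star (C s t)) + -(Iq s * star (C t r))) • q +
        (Iq t • S r s + Iq r • S s t + Iq s • S t r) = 0 := by
      rw [← hb]
      simp only [smul_add, smul_sub, smul_smul, add_smul, neg_smul]
      abel
    exact key _ _ _ (memadd _ _ (memadd _ _ (memsmul _ _ (hS r s))
      (memsmul _ _ (hS s t))) (memsmul _ _ (hS t r))) hb'
  -- skew-symmetry of S
  have hss : ∀ r s : Fin 4, S s r = - S r s := by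
    intro r s
    have hsk := congrArg (fun f : V →ₗ[Quaternion ℝ] V => f q) (hRskew (Iq r • q) (Iq s • q))
    simp only [LinearMap.neg_apply] at hsk
    rw [(hRep r s).2.1, (hRep s r).2.1] at hsk
    have hb' : (D r s + D s r) • p + (-(star (C r s)) + -(star (C s r))) • q +
        (S r s + S s r) = 0 := by
      rw [eq_neg_iff_add_eq_zero] at hsk
      rw [← hsk]
      simp only [add_smul, neg_smul]
      abel
    have h2 := key _ _ _ (memadd _ _ (hS r s) (hS s r)) hb'
    rw [← sub_eq_zero, ← h2]
    abel
  -- part 2, for all r s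
  have h2 : ∀ r s : Fin 4, S r s = Iq r • S 0 s - Iq s • S 0 r := by
    intro r s
    have h := h1 r s 0
    rw [show Iq (0 : Fin 4) = 1 from rfl, one_smul, hss 0 s, smul_neg] at h
    rw [← sub_eq_zero, ← h]
    abel
  refine ⟨h1, fun r s _ _ => h2 r s, ?_⟩
  -- part 3
  have h := h1 1 2 3
  rw [h2 1 2, h2 2 3, h2 3 1] at h
  rw [show Iq (1 : Fin 4) = qi from rfl, show Iq (2 : Fin 4) = qj from rfl,
    show Iq (3 : Fin 4) = qk from rfl] at h
  simp only [smul_sub, smul_smul, qki, qkj, qij, qik, qji, qjk, qkk, neg_smul,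
    sub_neg_eq_add] at h
  -- h should now give 2 • (qi • S 0 1 + qj • S 0 2 + qk • S 0 3) = 0
  have hx : (2 : Quaternion ℝ) • (qi • S 0 1 + qj • S 0 2 + qk • S 0 3) = 0 := by
    rw [two_smul, ← h]
    abel
  have h2ne : (2 : Quaternion ℝ) ≠ 0 := by
    intro hcon
    have hre : (2 : ℝ) = 0 := by
      calc (2 : ℝ) = (2 : Quaternion ℝ).re := rfl
        _ = (0 : Quaternion ℝ).re := by rw [hcon]
        _ = 0 := rfl
    norm_num at hre
  have h3 : qi • S 0 1 + qj • S 0 2 + qk • S 0 3 = 0 := by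
    have h4 := congrArg (fun v : V => ((2 : Quaternion ℝ)⁻¹) • v) hx
    simpa [smul_smul, ← mul_assoc, inv_mul_cancel₀ h2ne] using h4
  have h5 := congrArg (fun v : V => (-qk) • v) h3
  simp only [smul_add, smul_smul, smul_zero, neg_mul, qki, qkj, qkk, neg_neg,
    neg_smul, one_smul] at h5
  rw [← sub_eq_zero, ← h5]
  abel

end
end

section
/- Let 𝔤 ⊆ 𝔰𝔭(1,n+1)_{ℍp} be a subalgebra such that the projection pr_ℍ(𝔤) to the ℍ-component (the a-entry of (a,A,X,b)) has real dimension 1. Then 𝔤 is not a Berger algebra, i.e., the span of {R(u,v) : R ∈ ℛ(𝔤), u, v ∈ ℝ^{4,4n+4}} is a proper subspace of 𝔤. -/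
noncomputable section

def iH : Quaternion ℝ := ⟨0,1,0,0⟩
def jH : Quaternion ℝ := ⟨0,0,1,0⟩
def kH : Quaternion ℝ := ⟨0,0,0,1⟩

@[simp] lemma iH_re : iH.re = 0 := rfl
@[simp] lemma iH_imI : iH.imI = 1 := rfl
@[simp] lemma iH_imJ : iH.imJ = 0 := rfl
@[simp] lemma iH_imK : iH.imK = 0 := rfl
@[simp] lemma jH_re : jH.re = 0 := rfl
@[simp] lemma jH_imI : jH.imI = 0 := rfl
@[simp] lemma jH_imJ : jH.imJ = 1 := rfl
@[simp] lemma jH_imK : jH.imK = 0 := rfl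
@[simp] lemma kH_re : kH.re = 0 := rfl
@[simp] lemma kH_imI : kH.imI = 0 := rfl
@[simp] lemma kH_imJ : kH.imJ = 0 := rfl
@[simp] lemma kH_imK : kH.imK = 1 := rfl

lemma star_iH : star iH = -iH := by simp [Quaternion.ext_iff]
lemma star_jH : star jH = -jH := by simp [Quaternion.ext_iff]
lemma star_kH : star kH = -kH := by simp [Quaternion.ext_iff]

lemma quat_decomp (d : Quaternion ℝ) :
    d = d.re • (1 : Quaternion ℝ) + d.imI • iH + d.imJ • jH + d.imK • kH := by
  simp [Quaternion.ext_iff, Quaternion.re_one, Quaternion.imI_one, Quaternion.imJ_one, Quaternion.imK_one, Quaternion.re_zero, Quaternion.imI_zero, Quaternion.imJ_zero, Quaternion.imK_zero]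

lemma keygen (a₀ : Quaternion ℝ) (ha : a₀ ≠ 0) (x y : Quaternion ℝ)
    (hlin : ∀ u v w : ℝ, u • x - v • y - w • (1 : Quaternion ℝ) = 0 → u = 0 ∧ v = 0)
    (s1 s2 t : ℝ) (h : s1 • a₀ * x - s2 • a₀ * y = t • a₀) : s1 = 0 ∧ s2 = 0 := by
  have h2 : a₀ * (s1 • x - s2 • y - t • 1) = 0 := by
    have e : a₀ * (s1 • x - s2 • y - t • 1)
        = s1 • a₀ * x - s2 • a₀ * y - t • a₀ := by
      rw [mul_sub, mul_sub, mul_smul_comm, mul_smul_comm, mul_smul_comm, mul_one,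
        smul_mul_assoc, smul_mul_assoc]
    rw [e, h, sub_self]
  rcases mul_eq_zero.mp h2 with h3 | h3
  · exact absurd h3 ha
  · exact hlin _ _ _ h3

lemma keyij (a₀ : Quaternion ℝ) (ha : a₀ ≠ 0) (s1 s2 t : ℝ)
    (h : s1 • a₀ * iH - s2 • a₀ * jH = t • a₀) : s1 = 0 ∧ s2 = 0 := by
  refine keygen a₀ ha iH jH ?_ s1 s2 t h
  intro u v w hh
  rw [Quaternion.ext_iff] at hh
  simp [Quaternion.re_one, Quaternion.imI_one, Quaternion.imJ_one, Quaternion.imK_one, Quaternion.re_zero, Quaternion.imI_zero, Quaternion.imJ_zero, Quaternion.imK_zero] at hh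
  obtain ⟨_, h1, h2, _⟩ := hh
  exact ⟨h1, by linarith⟩

lemma keyik (a₀ : Quaternion ℝ) (ha : a₀ ≠ 0) (s1 s2 t : ℝ)
    (h : s1 • a₀ * iH - s2 • a₀ * kH = t • a₀) : s1 = 0 ∧ s2 = 0 := by
  refine keygen a₀ ha iH kH ?_ s1 s2 t h
  intro u v w hh
  rw [Quaternion.ext_iff] at hh
  simp [Quaternion.re_one, Quaternion.imI_one, Quaternion.imJ_one, Quaternion.imK_one, Quaternion.re_zero, Quaternion.imI_zero, Quaternion.imJ_zero, Quaternion.imK_zero] at hh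
  obtain ⟨_, h1, _, h2⟩ := hh
  exact ⟨h1, by linarith⟩

/-- If `𝔤 ⊆ 𝔰𝔭(1,n+1)_{ℍp}` is a subalgebra whose projection to the `ℍ`-component
(the `a`-entry) has real dimension `1`, then `𝔤` is not a Berger algebra: the span of
the values of all algebraic curvature tensors of type `𝔤` is a proper subspace of `𝔤`. -/
theorem dim_one_H_projection_not_Berger {V : Type*} [AddCommGroup V]
    [Module (Quaternion ℝ) V] [Module ℝ V] [IsScalarTower ℝ (Quaternion ℝ) V]
    [SMulCommClass (Quaternion ℝ) ℝ V]
    (g : V → V → Quaternion ℝ)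
    (hga : ∀ x y z, g (x + y) z = g x z + g y z)
    (hga' : ∀ x y z, g x (y + z) = g x y + g x z)
    (hgs : ∀ (c : Quaternion ℝ) (x y : V), g (c • x) y = c * g x y)
    (hgh : ∀ x y, star (g y x) = g x y)
    (hnd : ∀ v : V, (∀ w, (g v w).re = 0) → v = 0)
    (p q : V) (hp : g p p = 0) (hq : g q q = 0) (hpq : g p q = 1)
    (hspan : ∀ v : V, ∃ c d : Quaternion ℝ, ∃ e ∈ Esub g p q, v = c • p + d • q + e)
    (G : Submodule ℝ (V →ₗ[Quaternion ℝ] V))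
    (hGstab : ∀ f ∈ G, (∀ x y, g (f x) y + g x (f y) = 0) ∧
      ∃ c : Quaternion ℝ, f p = c • p)
    (hGlie : ∀ f ∈ G, ∀ f' ∈ G, f ∘ₗ f' - f' ∘ₗ f ∈ G)
    (a₀ : Quaternion ℝ) (ha₀ : a₀ ≠ 0)
    (hpr : {a : Quaternion ℝ | ∃ f ∈ G, f p = a • p} =
      {x : Quaternion ℝ | ∃ t : ℝ, x = t • a₀}) :
    Submodule.span ℝ {F : V →ₗ[Quaternion ℝ] V |
      ∃ R : V → V → (V →ₗ[Quaternion ℝ] V),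
        (∀ u v, R u v ∈ G) ∧
        (∀ u v, R u v = - R v u) ∧
        (∀ u u' v, R (u + u') v = R u v + R u' v) ∧
        (∀ (r : ℝ) (u v : V), R (r • u) v = r • R u v) ∧
        (∀ u v w, R u v w + R v w u + R w u v = 0) ∧
        ∃ u v, F = R u v} < G := by
  -- basic properties of g
  have hg0 : ∀ y, g 0 y = 0 := by
    intro y
    have h := hga 0 0 y
    rw [add_zero] at h
    have h' : g 0 y + 0 = g 0 y + g 0 y := by rw [add_zero]; exact h
    exact (add_left_cancel h').symm
  have hg0' : ∀ x, g x 0 = 0 := by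
    intro x; rw [← hgh, hg0, star_zero]
  have hgn' : ∀ x y, g x (-y) = -g x y := by
    intro x y
    have h := hga' x y (-y)
    rw [add_neg_cancel, hg0'] at h
    exact (eq_neg_of_add_eq_zero_right h.symm)
  have hgn : ∀ x y, g (-x) y = -g x y := by
    intro x y
    have h := hga x (-x) y
    rw [add_neg_cancel, hg0] at h
    exact (eq_neg_of_add_eq_zero_right h.symm)
  have hgsr : ∀ (c : Quaternion ℝ) (x y : V), g x (c • y) = g x y * star c := by
    intro c x y; rw [← hgh, hgs, star_mul, hgh]
  have hgr : ∀ (r : ℝ) (x y : V), g (r • x) y = r • g x y := by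
    intro r x y
    rw [← algebraMap_smul (Quaternion ℝ) r x, hgs, ← Algebra.smul_def]
  have hgpq' : ∀ d : Quaternion ℝ, g p (d • q) = star d := by
    intro d; rw [hgsr, hpq, one_mul]
  have hgpp' : ∀ d : Quaternion ℝ, g p (d • p) = 0 := by
    intro d; rw [hgsr, hp, zero_mul]
  -- every curvature value kills p
  have hbig : ∀ F ∈ {F : V →ₗ[Quaternion ℝ] V |
      ∃ R : V → V → (V →ₗ[Quaternion ℝ] V),
        (∀ u v, R u v ∈ G) ∧
        (∀ u v, R u v = - R v u) ∧
        (∀ u u' v, R (u + u') v = R u v + R u' v) ∧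
        (∀ (r : ℝ) (u v : V), R (r • u) v = r • R u v) ∧
        (∀ u v w, R u v w + R v w u + R w u v = 0) ∧
        ∃ u v, F = R u v}, F p = 0 := by
    rintro F ⟨R, hRG, hRsk, hRa, hRs, hRB, u, v, rfl⟩
    clear hnd hq hGlie
    -- skew-adjointness
    have hadj : ∀ u v x y, g (R u v x) y = - g x (R u v y) := by
      intro u v x y
      exact eq_neg_of_add_eq_zero_left ((hGstab _ (hRG u v)).1 x y)
    -- R u v p is a multiple of p, with coefficient g (R u v p) q
    have hcp : ∀ u v, R u v p = g (R u v p) q • p := by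
      intro u v
      obtain ⟨c', hc'⟩ := (hGstab _ (hRG u v)).2
      rw [hc', hgs, hpq, mul_one]
    have hmem : ∀ u v, ∃ t : ℝ, g (R u v p) q = t • a₀ := by
      intro u v
      have h : g (R u v p) q ∈ {a : Quaternion ℝ | ∃ f ∈ G, f p = a • p} :=
        ⟨R u v, hRG u v, hcp u v⟩
      rw [hpr] at h
      exact h
    have hcskew : ∀ u v, g (R u v p) q = - g (R v u p) q := by
      intro u v
      rw [hRsk u v, LinearMap.neg_apply, hgn]
    -- the key identity (★)
    have hstar : ∀ u v, g (R u v p) q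
        = -(g (R v q p) q * g p u) - (g (R q u p) q * g p v) := by
      intro u v
      have e1 : g (R u v p) q = - g p (R u v q) := hadj u v p q
      have hB := hRB u v q
      rw [add_assoc] at hB
      have e2 : R u v q = -(R v q u + R q u v) := eq_neg_of_add_eq_zero_left hB
      have e3 : g p (R v q u) = - g (R v q p) u := by
        rw [hadj v q p u, neg_neg]
      rw [hcp v q, hgs] at e3
      have e4 : g p (R q u v) = - g (R q u p) v := by
        rw [hadj q u p v, neg_neg]
      rw [hcp q u, hgs] at e4
      rw [e1, e2, hgn', neg_neg, hga', e3, e4]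
      abel
    -- c q q = 0
    have hcqq : g (R q q p) q = 0 := by
      have h2 : g (R q q p) q + g (R q q p) q = 0 := by
        nth_rewrite 1 [hcskew q q]
        exact neg_add_cancel _
      have h3 : (2 : ℝ) • g (R q q p) q = 0 := by
        rw [two_smul]; exact h2
      have h4 := congrArg (fun y => ((2 : ℝ)⁻¹) • y) h3
      simp only [smul_smul, smul_zero] at h4
      norm_num at h4
      exact h4
    -- the τ coefficients vanish
    obtain ⟨τ1, hτ1⟩ := hmem (iH • q) q
    obtain ⟨τ2, hτ2⟩ := hmem (jH • q) q
    obtain ⟨τ3, hτ3⟩ := hmem (kH • q) q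
    have hτ12 : τ2 = 0 ∧ τ1 = 0 := by
      obtain ⟨t12, ht12⟩ := hmem (iH • q) (jH • q)
      have h := hstar (iH • q) (jH • q)
      rw [ht12, hτ2, hcskew q (iH • q), hτ1, hgpq', hgpq', star_iH, star_jH] at h
      refine keyij a₀ ha₀ τ2 τ1 t12 ?_
      rw [h]
      simp only [mul_neg, neg_mul, neg_neg, smul_mul_assoc]
    have hτ13 : τ3 = 0 ∧ τ1 = 0 := by
      obtain ⟨t13, ht13⟩ := hmem (iH • q) (kH • q)
      have h := hstar (iH • q) (kH • q)
      rw [ht13, hτ3, hcskew q (iH • q), hτ1, hgpq', hgpq', star_iH, star_kH] at h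
      refine keyik a₀ ha₀ τ3 τ1 t13 ?_
      rw [h]
      simp only [mul_neg, neg_mul, neg_neg, smul_mul_assoc]
    -- if g p u = 0 then c u q = 0
    have hgen : ∀ u, g p u = 0 → g (R u q p) q = 0 := by
      intro u hu
      obtain ⟨s, hs⟩ := hmem u q
      obtain ⟨t, ht⟩ := hmem u (iH • q)
      have h := hstar u (iH • q)
      rw [ht, hu, hcskew q u, hs, hgpq', star_iH] at h
      have h2 : (-s) • a₀ * iH - (0 : ℝ) • a₀ * jH = t • a₀ := by
        rw [h]
        simp only [mul_zero, neg_zero, zero_sub, mul_neg, neg_mul, neg_neg,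
          zero_smul, zero_mul, neg_smul, smul_mul_assoc]
        abel
      have := (keyij a₀ ha₀ (-s) 0 t h2).1
      have hs0 : s = 0 := by linarith
      rw [hs, hs0, zero_smul]
    -- c (d • q) q = 0 for all d
    have hlam : ∀ d : Quaternion ℝ, g (R (d • q) q p) q = 0 := by
      intro d
      have hdq : d • q = d.re • q + d.imI • (iH • q) + d.imJ • (jH • q)
          + d.imK • (kH • q) := by
        nth_rewrite 1 [quat_decomp d]
        rw [add_smul, add_smul, add_smul, smul_assoc, smul_assoc, smul_assoc,
          smul_assoc, one_smul]
      rw [hdq, hRa, hRa, hRa, hRs, hRs, hRs, hRs]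
      simp only [LinearMap.add_apply, LinearMap.smul_apply]
      rw [hga, hga, hga, hgr, hgr, hgr, hgr, hcqq, hτ1, hτ2, hτ3,
        hτ12.2, hτ12.1, hτ13.1]
      simp
    -- c u q = 0 for all u
    have hallq : ∀ u, g (R u q p) q = 0 := by
      intro u
      obtain ⟨c1, d1, e1, he1, rfl⟩ := hspan u
      rw [hRa, hRa]
      simp only [LinearMap.add_apply]
      rw [hga, hga, hgen _ (hgpp' c1), hlam d1, hgen _ he1.1]
      simp
    -- conclude
    show R u v p = 0
    rw [hcp u v]
    suffices hz : g (R u v p) q = 0 by rw [hz, zero_smul]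
    rw [hstar u v, hallq v, hcskew q u, hallq u]
    simp
  -- assemble
  have hle : Submodule.span ℝ {F : V →ₗ[Quaternion ℝ] V |
      ∃ R : V → V → (V →ₗ[Quaternion ℝ] V),
        (∀ u v, R u v ∈ G) ∧
        (∀ u v, R u v = - R v u) ∧
        (∀ u u' v, R (u + u') v = R u v + R u' v) ∧
        (∀ (r : ℝ) (u v : V), R (r • u) v = r • R u v) ∧
        (∀ u v w, R u v w + R v w u + R w u v = 0) ∧
        ∃ u v, F = R u v} ≤ G := by
    rw [Submodule.span_le]
    rintro F ⟨R, hRG, _, _, _, _, u, v, rfl⟩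
    exact hRG u v
  refine lt_of_le_of_ne hle ?_
  intro hEq
  have ha : a₀ ∈ {a : Quaternion ℝ | ∃ f ∈ G, f p = a • p} := by
    rw [hpr]
    exact ⟨1, (one_smul ℝ a₀).symm⟩
  have hspanzero : ∀ F, F ∈ Submodule.span ℝ {F : V →ₗ[Quaternion ℝ] V |
      ∃ R : V → V → (V →ₗ[Quaternion ℝ] V),
        (∀ u v, R u v ∈ G) ∧
        (∀ u v, R u v = - R v u) ∧
        (∀ u u' v, R (u + u') v = R u v + R u' v) ∧
        (∀ (r : ℝ) (u v : V), R (r • u) v = r • R u v) ∧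
        (∀ u v w, R u v w + R v w u + R w u v = 0) ∧
        ∃ u v, F = R u v} → F p = 0 := by
    intro F hF
    induction hF using Submodule.span_induction with
    | mem x hx => exact hbig x hx
    | zero => simp
    | add x y _ _ hx hy => simp [LinearMap.add_apply, hx, hy]
    | smul r x _ hx => simp [LinearMap.smul_apply, hx]
  obtain ⟨f, hfG, hfp⟩ := ha
  have hfp0 : f p = 0 := by
    apply hspanzero
    rw [hEq]
    exact hfG
  rw [hfp0] at hfp
  have : (0 : Quaternion ℝ) = a₀ := by
    rw [← hg0 q, hfp, hgs, hpq, mul_one]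
  exact ha₀ this.symm

end
end
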